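/- arXiv:2407.21360 — 2 statements merged into one kernel-verified Lean document; each statement's English description precedes it below -/
import Mathlib

section
/- If a graph G has a c-colouring in which every monochromatic component has at most k vertices, and H has a c-colouring in which every monochromatic component has at most k vertices, and at least one of G, H has at most m vertices, then G ⊠ H (the strong product) has a c-colouring in which every monochromatic component has at most k·m vertices. In particular, G ⊠ H is c-colourable with every monochromatic component of size at most k·|V(G ⊠ H)|^{1/2}. -/
open SimpleGraph

universe u v

/-- The strong product of two simple graphs. -/
def StrongProd {α : Type u} {β : Type v} (G : SimpleGraph α) (H : SimpleGraph β) :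
    SimpleGraph (α × β) where
  Adj x y := (x.1 = y.1 ∧ H.Adj x.2 y.2) ∨ (x.2 = y.2 ∧ G.Adj x.1 y.1) ∨
    (G.Adj x.1 y.1 ∧ H.Adj x.2 y.2)
  symm := by
    refine ⟨?_⟩
    rintro x y (⟨h1, h2⟩ | ⟨h1, h2⟩ | ⟨h1, h2⟩)
    · exact Or.inl ⟨h1.symm, h2.symm⟩
    · exact Or.inr (Or.inl ⟨h1.symm, h2.symm⟩)
    · exact Or.inr (Or.inr ⟨h1.symm, h2.symm⟩)
  loopless := by
    refine ⟨?_⟩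
    rintro x (⟨h1, h2⟩ | ⟨h1, h2⟩ | ⟨h1, h2⟩)
    · exact h2.ne rfl
    · exact h2.ne rfl
    · exact h1.ne rfl

/-- The fan graph `F_n`: a path on `n` vertices (vertices `1,…,n`) together with
one dominant vertex (vertex `0`) adjacent to all path vertices. -/
def Fan (n : ℕ) : SimpleGraph (Fin (n + 1)) :=
  SimpleGraph.fromRel (fun u v => u = 0 ∨ u.val + 1 = v.val)

/-- The cone over `m` disjoint copies of `G`: `m` pairwise disjoint copies of `G`
together with one new vertex adjacent to every vertex of every copy. -/
def GraphCone {V : Type u} (m : ℕ) (G : SimpleGraph V) :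
    SimpleGraph (Option (Fin m × V)) where
  Adj x y :=
    match x, y with
    | none, none => False
    | none, some _ => True
    | some _, none => True
    | some (i, _u), some (j, _v) => i = j ∧ G.Adj _u _v
  symm := by
    refine ⟨?_⟩
    rintro (_ | ⟨i, u⟩) (_ | ⟨j, v⟩) h
    · exact h
    · trivial
    · trivial
    · exact ⟨h.1.symm, h.2.symm⟩
  loopless := by
    refine ⟨?_⟩
    rintro (_ | ⟨i, u⟩) h
    · exact h
    · exact h.2.ne rfl

/-- `G` has a tree-decomposition of width at most `t`. -/
def TreewidthLE {V : Type u} (G : SimpleGraph V) (t : ℕ) : Prop :=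
  ∃ (ι : Type) (T : SimpleGraph ι) (W : ι → Finset V),
    T.IsTree ∧
    (∀ ⦃u v : V⦄, G.Adj u v → ∃ x, u ∈ W x ∧ v ∈ W x) ∧
    (∀ v : V, (T.induce {x | v ∈ W x}).Connected) ∧
    (∀ x, (W x).card ≤ t + 1)

/-- A set of vertices is monochromatic under a colouring `f`. -/
def IsMonochromatic {V : Type u} {c : ℕ} (f : V → Fin c) (S : Finset V) : Prop :=
  ∀ u ∈ S, ∀ v ∈ S, f u = f v

/-- Every monochromatic component of the colouring `f` of `G` has at most `k` vertices. -/
def ClusterLE {V : Type u} {c : ℕ} (G : SimpleGraph V) (f : V → Fin c) (k : ℕ) : Prop :=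
  ∀ S : Finset V, IsMonochromatic f S → (G.induce (S : Set V)).Connected → S.card ≤ k

/-- Every monochromatic component of the colouring `f` of `G` has at most `b` vertices
(real-valued bound). -/
def ClusterLEReal {V : Type u} {c : ℕ} (G : SimpleGraph V) (f : V → Fin c) (b : ℝ) : Prop :=
  ∀ S : Finset V, IsMonochromatic f S → (G.induce (S : Set V)).Connected → (S.card : ℝ) ≤ b
lemma key_snd {V₁ V₂ : Type} [DecidableEq V₂] (G : SimpleGraph V₁) (H : SimpleGraph V₂)
    (S : Finset (V₁ × V₂))
    (hconn : ((StrongProd G H).induce (S : Set (V₁ × V₂))).Connected) :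
    (H.induce ((S.image Prod.snd : Finset V₂) : Set V₂)).Connected := by
  set T := S.image Prod.snd with hT
  have hmem : ∀ p : (S : Set (V₁ × V₂)), p.1.2 ∈ (T : Set V₂) := fun p =>
    Finset.mem_coe.2 (Finset.mem_image_of_mem _ p.2)
  have hreach : ∀ x y : (S : Set (V₁ × V₂)),
      ((StrongProd G H).induce (S : Set (V₁ × V₂))).Reachable x y →
      (H.induce (T : Set V₂)).Reachable ⟨x.1.2, hmem x⟩ ⟨y.1.2, hmem y⟩ := by
    intro x y hxy
    obtain ⟨w⟩ := hxy
    induction w with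
    | nil => exact Reachable.refl _
    | @cons a b y h p ih =>
      have hadj : (StrongProd G H).Adj a.1 b.1 := h
      rcases hadj with ⟨h1, h2⟩ | ⟨h1, h2⟩ | ⟨h1, h2⟩
      · exact (Adj.reachable (show (H.induce (T:Set V₂)).Adj ⟨a.1.2, hmem a⟩ ⟨b.1.2, hmem b⟩ from h2)).trans ih
      · have : (⟨a.1.2, hmem a⟩ : (T : Set V₂)) = ⟨b.1.2, hmem b⟩ := Subtype.ext h1
        rw [this]; exact ih
      · exact (Adj.reachable (show (H.induce (T:Set V₂)).Adj ⟨a.1.2, hmem a⟩ ⟨b.1.2, hmem b⟩ from h2)).trans ih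
  obtain ⟨⟨p, hp⟩⟩ := hconn.nonempty
  haveI : Nonempty (T : Set V₂) := ⟨⟨p.2, hmem ⟨p, hp⟩⟩⟩
  constructor
  rintro ⟨b, hb⟩ ⟨b', hb'⟩
  obtain ⟨a, haS, hab⟩ := Finset.mem_image.1 (Finset.mem_coe.1 hb)
  obtain ⟨a', haS', hab'⟩ := Finset.mem_image.1 (Finset.mem_coe.1 hb')
  subst hab; subst hab'
  exact hreach ⟨a, haS⟩ ⟨a', haS'⟩ (hconn.preconnected _ _)

lemma key_fst {V₁ V₂ : Type} [DecidableEq V₁] (G : SimpleGraph V₁) (H : SimpleGraph V₂)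
    (S : Finset (V₁ × V₂))
    (hconn : ((StrongProd G H).induce (S : Set (V₁ × V₂))).Connected) :
    (G.induce ((S.image Prod.fst : Finset V₁) : Set V₁)).Connected := by
  set T := S.image Prod.fst with hT
  have hmem : ∀ p : (S : Set (V₁ × V₂)), p.1.1 ∈ (T : Set V₁) := fun p =>
    Finset.mem_coe.2 (Finset.mem_image_of_mem _ p.2)
  have hreach : ∀ x y : (S : Set (V₁ × V₂)),
      ((StrongProd G H).induce (S : Set (V₁ × V₂))).Reachable x y →
      (G.induce (T : Set V₁)).Reachable ⟨x.1.1, hmem x⟩ ⟨y.1.1, hmem y⟩ := by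
    intro x y hxy
    obtain ⟨w⟩ := hxy
    induction w with
    | nil => exact Reachable.refl _
    | @cons a b y h p ih =>
      have hadj : (StrongProd G H).Adj a.1 b.1 := h
      rcases hadj with ⟨h1, h2⟩ | ⟨h1, h2⟩ | ⟨h1, h2⟩
      · have : (⟨a.1.1, hmem a⟩ : (T : Set V₁)) = ⟨b.1.1, hmem b⟩ := Subtype.ext h1
        rw [this]; exact ih
      · exact (Adj.reachable (show (G.induce (T:Set V₁)).Adj ⟨a.1.1, hmem a⟩ ⟨b.1.1, hmem b⟩ from h2)).trans ih
      · exact (Adj.reachable (show (G.induce (T:Set V₁)).Adj ⟨a.1.1, hmem a⟩ ⟨b.1.1, hmem b⟩ from h1)).trans ih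
  obtain ⟨⟨p, hp⟩⟩ := hconn.nonempty
  haveI : Nonempty (T : Set V₁) := ⟨⟨p.1, hmem ⟨p, hp⟩⟩⟩
  constructor
  rintro ⟨b, hb⟩ ⟨b', hb'⟩
  obtain ⟨a, haS, hab⟩ := Finset.mem_image.1 (Finset.mem_coe.1 hb)
  obtain ⟨a', haS', hab'⟩ := Finset.mem_image.1 (Finset.mem_coe.1 hb')
  subst hab; subst hab'
  exact hreach ⟨a, haS⟩ ⟨a', haS'⟩ (hconn.preconnected _ _)

lemma strongProd_aux {V₁ V₂ : Type} [Fintype V₁] [Fintype V₂]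
    (G : SimpleGraph V₁) (H : SimpleGraph V₂) (c k m : ℕ)
    (f : V₁ → Fin c) (hf : ClusterLE G f k)
    (g : V₂ → Fin c) (hg : ClusterLE H g k)
    (hm : Fintype.card V₁ ≤ m ∨ Fintype.card V₂ ≤ m) :
    ∃ h : V₁ × V₂ → Fin c, ClusterLE (StrongProd G H) h (k * m) := by
  classical
  rcases hm with hm | hm
  · refine ⟨fun p => g p.2, ?_⟩
    intro S hmono hconn
    have hTmono : IsMonochromatic g (S.image Prod.snd) := by
      intro u hu v hv
      obtain ⟨a, haS, rfl⟩ := Finset.mem_image.1 hu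
      obtain ⟨b, hbS, rfl⟩ := Finset.mem_image.1 hv
      exact hmono a haS b hbS
    have hTk : (S.image Prod.snd).card ≤ k := hg _ hTmono (key_snd G H S hconn)
    calc S.card ≤ ((Finset.univ : Finset V₁) ×ˢ S.image Prod.snd).card :=
          Finset.card_le_card (fun p hp => Finset.mem_product.2
            ⟨Finset.mem_univ _, Finset.mem_image_of_mem _ hp⟩)
      _ = Fintype.card V₁ * (S.image Prod.snd).card := by
          rw [Finset.card_product, Finset.card_univ]
      _ ≤ m * k := Nat.mul_le_mul hm hTk
      _ = k * m := Nat.mul_comm _ _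
  · refine ⟨fun p => f p.1, ?_⟩
    intro S hmono hconn
    have hTmono : IsMonochromatic f (S.image Prod.fst) := by
      intro u hu v hv
      obtain ⟨a, haS, rfl⟩ := Finset.mem_image.1 hu
      obtain ⟨b, hbS, rfl⟩ := Finset.mem_image.1 hv
      exact hmono a haS b hbS
    have hTk : (S.image Prod.fst).card ≤ k := hf _ hTmono (key_fst G H S hconn)
    calc S.card ≤ (S.image Prod.fst ×ˢ (Finset.univ : Finset V₂)).card :=
          Finset.card_le_card (fun p hp => Finset.mem_product.2
            ⟨Finset.mem_image_of_mem _ hp, Finset.mem_univ _⟩)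
      _ = (S.image Prod.fst).card * Fintype.card V₂ := by
          rw [Finset.card_product, Finset.card_univ]
      _ ≤ k * m := Nat.mul_le_mul hTk hm


/-- Product colouring: if `G` and `H` are `c`-colourable with clustering at most `k`,
and one factor has at most `m` vertices, then `G ⊠ H` is `c`-colourable with clustering
at most `k * m`; in particular with clustering at most `k * |V(G ⊠ H)|^{1/2}`. -/
theorem strongProd_product_colouring {V₁ V₂ : Type} [Fintype V₁] [Fintype V₂]
    (G : SimpleGraph V₁) (H : SimpleGraph V₂) (c k m : ℕ)
    (f : V₁ → Fin c) (hf : ClusterLE G f k)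
    (g : V₂ → Fin c) (hg : ClusterLE H g k)
    (hm : Fintype.card V₁ ≤ m ∨ Fintype.card V₂ ≤ m) :
    (∃ h : V₁ × V₂ → Fin c, ClusterLE (StrongProd G H) h (k * m)) ∧
    (∃ h : V₁ × V₂ → Fin c, ClusterLEReal (StrongProd G H) h
      ((k : ℝ) * Real.sqrt (Fintype.card (V₁ × V₂)))) := by
  refine ⟨strongProd_aux G H c k m f hf g hg hm, ?_⟩
  set m₀ := min (Fintype.card V₁) (Fintype.card V₂) with hm₀
  obtain ⟨h, hh⟩ := strongProd_aux G H c k m₀ f hf g hg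
    (by rcases le_total (Fintype.card V₁) (Fintype.card V₂) with h' | h'
        · exact Or.inl (le_min le_rfl h')
        · exact Or.inr (le_min h' le_rfl))
  refine ⟨h, fun S hmono hconn => ?_⟩
  have h1 := hh S hmono hconn
  have hsqrt : (m₀ : ℝ) ≤ Real.sqrt (Fintype.card (V₁ × V₂)) := by
    rw [Fintype.card_prod]
    rw [show ((Fintype.card V₁ * Fintype.card V₂ : ℕ) : ℝ)
        = (Fintype.card V₁ : ℝ) * (Fintype.card V₂ : ℝ) by push_cast; ring]
    rw [Real.le_sqrt (by positivity) (by positivity)]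
    have hsq : m₀ * m₀ ≤ Fintype.card V₁ * Fintype.card V₂ :=
      Nat.mul_le_mul (min_le_left _ _) (min_le_right _ _)
    calc ((m₀ : ℝ)) ^ 2 = ((m₀ * m₀ : ℕ) : ℝ) := by push_cast; ring
      _ ≤ _ := by exact_mod_cast hsq
  calc (S.card : ℝ) ≤ (k * m₀ : ℕ) := by exact_mod_cast h1
    _ = (k : ℝ) * (m₀ : ℝ) := by push_cast; ring
    _ ≤ (k : ℝ) * Real.sqrt (Fintype.card (V₁ × V₂)) := by
        exact mul_le_mul_of_nonneg_left hsqrt (by positivity)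
end

section
/- Let c, k ≥ 2 be integers, H a graph, and P a path, such that (i) every (c−1)-colouring of H has a monochromatic component of size at least k, and (ii) every c-colouring of H ⊠ P has a monochromatic component of size at least k. Let J be the cone over (k−1) disjoint copies of H. Then every (c+1)-colouring of J ⊠ P has a monochromatic component of size at least k. -/
open SimpleGraph

universe u v

section Aux

variable {W : Type} {n : ℕ}

def monoGraph (G : SimpleGraph W) (g : W → Fin n) : SimpleGraph W where
  Adj a b := G.Adj a b ∧ g a = g b
  symm := by refine ⟨?_⟩; rintro a b ⟨h1, h2⟩; exact ⟨h1.symm, h2.symm⟩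
  loopless := ⟨fun a h => G.loopless.irrefl a h.1⟩

variable {G : SimpleGraph W} {g : W → Fin n}

lemma monoGraph_walk_colour {x y : W} (w : (monoGraph G g).Walk x y) :
    ∀ z ∈ w.support, g z = g x := by
  induction w with
  | nil => intro z hz; simp at hz; subst hz; rfl
  | cons h w ih =>
    intro z hz
    rw [SimpleGraph.Walk.support_cons] at hz
    rcases List.mem_cons.mp hz with h1 | h1
    · subst h1; rfl
    · rw [ih z h1]; exact (show G.Adj _ _ ∧ g _ = g _ from h).2.symm

lemma induce_reachable_of_walk {U : Set W} {x y : W}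
    (w : (monoGraph G g).Walk x y) (hs : ∀ z ∈ w.support, z ∈ U)
    (hx : x ∈ U) (hy : y ∈ U) :
    (G.induce U).Reachable ⟨x, hx⟩ ⟨y, hy⟩ := by
  induction w with
  | nil => rfl
  | @cons a b cc h w ih =>
    have hb : b ∈ U := hs b (by simp [SimpleGraph.Walk.support_cons])
    have h1 : (G.induce U).Adj ⟨a, hx⟩ ⟨b, hb⟩ := (show G.Adj a b ∧ g a = g b from h).1
    exact (h1.reachable).trans (ih (fun z hz => hs z (by simp [SimpleGraph.Walk.support_cons, hz])) hb hy)

/-- Any finite set of vertices monochromatically reachable from a single root `r`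
has at most `K` elements, if every monochromatic connected finset has at most `K`. -/
lemma card_le_of_mono_reachable
    (hb : ∀ S : Finset W, IsMonochromatic g S → (G.induce (S : Set W)).Connected → S.card ≤ K)
    (r : W) (F : Finset W) (hF : ∀ x ∈ F, (monoGraph G g).Reachable r x) :
    F.card ≤ K := by
  classical
  -- choose a walk for each element of F
  have hw : ∀ x : F, Nonempty ((monoGraph G g).Walk r x) := fun x => hF x x.2
  let wk : F → (Σ y : W, (monoGraph G g).Walk r y) := fun x => ⟨x, (hw x).some⟩
  let U : Finset W := insert r (F.attach.biUnion (fun x => ((hw x).some.support.toFinset)))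
  have hFU : F ⊆ U := by
    intro x hx
    exact Finset.mem_insert_of_mem (Finset.mem_biUnion.mpr
      ⟨⟨x, hx⟩, Finset.mem_attach _ _, by simp [SimpleGraph.Walk.end_mem_support]⟩)
  have hcol : ∀ z ∈ U, g z = g r := by
    intro z hz
    rcases Finset.mem_insert.mp hz with h1 | h1
    · subst h1; rfl
    · obtain ⟨x, -, hx2⟩ := Finset.mem_biUnion.mp h1
      exact monoGraph_walk_colour _ z (List.mem_toFinset.mp hx2)
  have hrU : r ∈ U := Finset.mem_insert_self _ _
  have hreach : ∀ z (hz : z ∈ U), (G.induce (U : Set W)).Reachable ⟨z, hz⟩ ⟨r, hrU⟩ := by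
    intro z hz
    rcases Finset.mem_insert.mp hz with h1 | h1
    · subst h1; rfl
    · obtain ⟨x, -, hx2⟩ := Finset.mem_biUnion.mp h1
      have hzs := List.mem_toFinset.mp hx2
      -- truncate the walk at z
      let w' := ((hw x).some.takeUntil z hzs)
      have hsub : ∀ u ∈ w'.support, u ∈ (U : Set W) := by
        intro u hu
        have : u ∈ (hw x).some.support := SimpleGraph.Walk.support_takeUntil_subset _ hzs hu
        exact Finset.mem_insert_of_mem (Finset.mem_biUnion.mpr ⟨x, Finset.mem_attach _ _, List.mem_toFinset.mpr this⟩)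
      exact (induce_reachable_of_walk w' hsub hrU hz).symm
  have hconn : (G.induce (U : Set W)).Connected := by
    rw [SimpleGraph.connected_iff]
    exact ⟨fun a b => (hreach a a.2).trans (hreach b b.2).symm, ⟨⟨r, hrU⟩⟩⟩
  have := hb U (fun u hu v hv => (hcol u hu).trans (hcol v hv).symm) hconn
  exact le_trans (Finset.card_le_card hFU) this

/-- Union version: everything reachable from a finite root set `R`. -/
lemma card_le_of_mono_reachable_finset {K : ℕ}
    (hb : ∀ S : Finset W, IsMonochromatic g S → (G.induce (S : Set W)).Connected → S.card ≤ K)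
    (R : Finset W) (F : Finset W)
    (hF : ∀ x ∈ F, ∃ r ∈ R, (monoGraph G g).Reachable r x) :
    F.card ≤ R.card * K := by
  classical
  let ρ : W → W := fun x => if h : ∃ r ∈ R, (monoGraph G g).Reachable r x then h.choose else x
  have hρ : ∀ x ∈ F, ρ x ∈ R ∧ (monoGraph G g).Reachable (ρ x) x := by
    intro x hx
    have h := hF x hx
    simp only [ρ, dif_pos h]
    exact ⟨h.choose_spec.1, h.choose_spec.2⟩
  have hsub : F ⊆ R.biUnion (fun r => F.filter (fun x => ρ x = r)) := by
    intro x hx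
    exact Finset.mem_biUnion.mpr ⟨ρ x, (hρ x hx).1, Finset.mem_filter.mpr ⟨hx, rfl⟩⟩
  calc F.card ≤ (R.biUnion (fun r => F.filter (fun x => ρ x = r))).card := Finset.card_le_card hsub
    _ ≤ ∑ r ∈ R, (F.filter (fun x => ρ x = r)).card := Finset.card_biUnion_le
    _ ≤ ∑ _r ∈ R, K := by
        refine Finset.sum_le_sum fun r _ => ?_
        refine card_le_of_mono_reachable hb r _ (fun x hx => ?_)
        obtain ⟨hx1, hx2⟩ := Finset.mem_filter.mp hx
        exact hx2 ▸ (hρ x hx1).2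
    _ = R.card * K := by rw [Finset.sum_const, smul_eq_mul]

end Aux

section Aux2

lemma transfer_win {U : Type} {W : Type} [DecidableEq W] {G' : SimpleGraph U} {G : SimpleGraph W}
    {n n' : ℕ} {g : W → Fin n}
    (e : U → W) (he : Function.Injective e)
    (hadj : ∀ u v, G'.Adj u v → G.Adj (e u) (e v))
    (f : U → Fin n') (hginv : ∀ u v, f u = f v → g (e u) = g (e v))
    (S : Finset U) (hm : IsMonochromatic f S) (hc : (G'.induce (S : Set U)).Connected) :
    IsMonochromatic g (S.image e) ∧ (G.induce ((S.image e : Finset W) : Set W)).Connected ∧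
      (S.image e).card = S.card := by
  refine ⟨?_, ?_, Finset.card_image_of_injective _ he⟩
  · rintro x hx y hy
    obtain ⟨u, hu, rfl⟩ := Finset.mem_image.mp hx
    obtain ⟨v, hv, rfl⟩ := Finset.mem_image.mp hy
    exact hginv u v (hm u hu v hv)
  · let φ : (G'.induce (S : Set U)) →g (G.induce ((S.image e : Finset W) : Set W)) :=
      ⟨fun x => ⟨e x.1, Finset.mem_coe.mpr (Finset.mem_image_of_mem e (Finset.mem_coe.mp x.2))⟩,
        fun {a b} h => hadj _ _ h⟩
    refine SimpleGraph.Connected.map φ ?_ hc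
    rintro ⟨w, hw⟩
    obtain ⟨u, hu, rfl⟩ := Finset.mem_image.mp (Finset.mem_coe.mp hw)
    exact ⟨⟨u, hu⟩, Subtype.ext rfl⟩

def runAnchor {n : ℕ} (s : ℕ → Fin n) : ℕ → ℕ
  | 0 => 0
  | (t+1) => if s t = s (t+1) then runAnchor s t else t + 1

variable {n : ℕ} {s : ℕ → Fin n}

lemma runAnchor_le (t : ℕ) : runAnchor s t ≤ t := by
  induction t with
  | zero => simp [runAnchor]
  | succ t ih =>
    rw [runAnchor]
    split
    · omega
    · omega

lemma runAnchor_boundary (t : ℕ) :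
    runAnchor s t = 0 ∨ (1 ≤ runAnchor s t ∧ s (runAnchor s t - 1) ≠ s (runAnchor s t)) := by
  induction t with
  | zero => left; rfl
  | succ t ih =>
    rw [runAnchor]
    split
    · exact ih
    · right; simpa using ‹¬ s t = s (t+1)›

lemma runAnchor_idem (t : ℕ) : runAnchor s (runAnchor s t) = runAnchor s t := by
  rcases runAnchor_boundary (s := s) t with h | ⟨h1, h2⟩
  · rw [h]; rfl
  · obtain ⟨b, hb⟩ : ∃ b, runAnchor s t = b + 1 := ⟨runAnchor s t - 1, by omega⟩
    rw [hb]
    rw [runAnchor, if_neg (by rw [hb] at h2; simpa using h2)]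

lemma runAnchor_eq_zero (t : ℕ) (h : ∀ u < t, s u = s (u + 1)) : runAnchor s t = 0 := by
  induction t with
  | zero => rfl
  | succ t ih =>
    rw [runAnchor, if_pos (h t (by omega))]
    exact ih (fun u hu => h u (by omega))

lemma exists_step_ne {t₁ t₂ : ℕ} (h : s t₁ ≠ s t₂) (hlt : t₁ < t₂) :
    ∃ u, t₁ ≤ u ∧ u + 1 ≤ t₂ ∧ s u ≠ s (u + 1) := by
  by_contra hcon
  push_neg at hcon
  have : ∀ d, t₁ + d ≤ t₂ → s (t₁ + d) = s t₁ := by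
    intro d
    induction d with
    | zero => intro _; rfl
    | succ d ih =>
      intro hd
      have h1 := hcon (t₁ + d) (by omega) (by omega)
      rw [show t₁ + (d + 1) = t₁ + d + 1 by omega, ← h1]
      exact ih (by omega)
  have := this (t₂ - t₁) (by omega)
  rw [show t₁ + (t₂ - t₁) = t₂ by omega] at this
  exact h this.symm

end Aux2

/-- If every `(c−1)`-colouring of `H` has a monochromatic component of size at least
`k`, and every `c`-colouring of `H ⊠ P` has a monochromatic component of size at least
`k`, then every `(c+1)`-colouring of `J ⊠ P` has a monochromatic component of size at
least `k`, where `J` is the cone over `k−1` disjoint copies of `H`. -/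
theorem induction_lower (c k : ℕ) (hc : 2 ≤ c) (hk : 2 ≤ k) {V : Type} (H : SimpleGraph V)
    (p : ℕ)
    (h1 : ∀ f : V → Fin (c - 1), ∃ S : Finset V, IsMonochromatic f S ∧
      (H.induce (S : Set V)).Connected ∧ k ≤ S.card)
    (h2 : ∀ f : V × Fin p → Fin c, ∃ S : Finset (V × Fin p), IsMonochromatic f S ∧
      ((StrongProd H (SimpleGraph.pathGraph p)).induce (S : Set (V × Fin p))).Connected ∧
      k ≤ S.card) :
    ∀ g : Option (Fin (k - 1) × V) × Fin p → Fin (c + 1),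
      ∃ S : Finset (Option (Fin (k - 1) × V) × Fin p), IsMonochromatic g S ∧
        ((StrongProd (GraphCone (k - 1) H) (SimpleGraph.pathGraph p)).induce
          (S : Set (Option (Fin (k - 1) × V) × Fin p))).Connected ∧
        k ≤ S.card := by
  classical
  intro g
  by_contra hcon
  push_neg at hcon
  obtain ⟨c, rfl⟩ : ∃ c', c = c' + 2 := ⟨c - 2, by omega⟩
  obtain ⟨k, rfl⟩ : ∃ k', k = k' + 2 := ⟨k - 2, by omega⟩
  clear hc hk
  set G := StrongProd (GraphCone (k + 2 - 1) H) (SimpleGraph.pathGraph p) with hGdef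
  have hb : ∀ S : Finset (Option (Fin (k + 2 - 1) × V) × Fin p), IsMonochromatic g S →
      (G.induce (S : Set (Option (Fin (k + 2 - 1) × V) × Fin p))).Connected → S.card ≤ k + 1 := by
    intro S h1' h2'
    have := hcon S h1' h2'
    omega
  -- dispose of the case p = 0
  rcases Nat.eq_zero_or_pos p with hp | hp
  · subst hp
    obtain ⟨S, -, -, hS⟩ := h2 (fun x => x.2.elim0)
    obtain ⟨x, -⟩ := Finset.card_pos.mp (by omega : 0 < S.card)
    exact x.2.elim0
  obtain ⟨p, rfl⟩ : ∃ p', p = p' + 1 := ⟨p - 1, by omega⟩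
  clear hp
  -- notation
  let sv : ℕ → Option (Fin (k + 2 - 1) × V) × Fin (p + 1) :=
    fun t => (none, (⟨min t p, by omega⟩ : Fin (p + 1)))
  let sb : Fin (k + 2 - 1) → V → ℕ → Option (Fin (k + 2 - 1) × V) × Fin (p + 1) :=
    fun i v t => (some (i, v), (⟨min t p, by omega⟩ : Fin (p + 1)))
  let s : ℕ → Fin (c + 2 + 1) := fun t => g (sv t)
  let Gf := monoGraph G g
  have hsv : ∀ t : Fin (p + 1), sv t.val = (none, t) := by
    intro t
    simp only [sv]
    congr 1
    exact Fin.ext (Nat.min_eq_left (Fin.is_le t))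
  have hsb : ∀ i v (t : Fin (p + 1)), sb i v t.val = (some (i, v), t) := by
    intro i v t
    simp only [sb]
    congr 1
    exact Fin.ext (Nat.min_eq_left (Fin.is_le t))
  -- spine edges
  have hadjspine : ∀ t : ℕ, t + 1 ≤ p → s t = s (t + 1) → Gf.Adj (sv t) (sv (t + 1)) := by
    intro t ht hcol
    refine (show G.Adj _ _ ∧ g _ = g _ from ⟨?_, hcol⟩)
    refine Or.inl ⟨rfl, ?_⟩
    rw [SimpleGraph.pathGraph_adj]
    left
    simp only [sv]
    omega
  have hreach : ∀ t : ℕ, t ≤ p → Gf.Reachable (sv (runAnchor s t)) (sv t) := by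
    intro t
    induction t with
    | zero => intro _; exact SimpleGraph.Reachable.refl _
    | succ t ih =>
      intro ht
      by_cases hst : s t = s (t + 1)
      · rw [runAnchor, if_pos hst]
        exact (ih (by omega)).trans (hadjspine t ht hst).reachable
      · rw [runAnchor, if_neg hst]
  -- adjacency of a slab witness with a nearby spine vertex
  have hwadj : ∀ (i : Fin (k + 2 - 1)) (v : V) (t t' : ℕ), t ≤ p → t' ≤ p →
      (t' = t ∨ t' + 1 = t ∨ t + 1 = t') → g (sb i v t) = s t' →
      Gf.Adj (sb i v t) (sv t') := by
    intro i v t t' ht ht' hnear hcol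
    refine (show G.Adj _ _ ∧ g _ = g _ from ⟨?_, hcol⟩)
    have hcone : (GraphCone (k + 2 - 1) H).Adj (some (i, v)) none := trivial
    rcases hnear with h | h
    · subst h
      exact Or.inr (Or.inl ⟨rfl, hcone⟩)
    · refine Or.inr (Or.inr ⟨hcone, ?_⟩)
      rw [SimpleGraph.pathGraph_adj]
      simp only [sv, sb]
      omega
  by_cases hcs : ∀ t : Fin (p + 1), g (none, t) = g ((none : Option (Fin (k + 2 - 1) × V)), (⟨0, by omega⟩ : Fin (p + 1)))
  · -- the spine is monochromatic, say with colour a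
    set a := g ((none : Option (Fin (k + 2 - 1) × V)), (⟨0, by omega⟩ : Fin (p + 1))) with hadef
    have hsa : ∀ t : ℕ, t ≤ p → s t = a := by
      intro t ht
      exact hcs ⟨min t p, by omega⟩
    by_cases hmiss : ∃ i : Fin (k + 2 - 1), ∀ (v : V) (t : Fin (p + 1)), g (some (i, v), t) ≠ a
    · -- some copy misses the colour a entirely: use h2
      obtain ⟨i, hi⟩ := hmiss
      let e : V × Fin (p + 1) → Option (Fin (k + 2 - 1) × V) × Fin (p + 1) :=
        fun x => (some (i, x.1), x.2)
      have hne : ∀ x : V × Fin (p + 1), g (e x) ≠ a := fun x => hi x.1 x.2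
      let f : V × Fin (p + 1) → Fin (c + 2) := fun x => (Fin.exists_succAbove_eq (hne x)).choose
      have hf : ∀ x, a.succAbove (f x) = g (e x) :=
        fun x => (Fin.exists_succAbove_eq (hne x)).choose_spec
      obtain ⟨S, hm, hconn, hcard⟩ := h2 f
      have he : Function.Injective e := by
        intro x y hxy
        simp only [e, Prod.mk.injEq, Option.some.injEq] at hxy
        exact Prod.ext hxy.1.2 hxy.2
      have hadj : ∀ u v, (StrongProd H (SimpleGraph.pathGraph (p + 1))).Adj u v →
          G.Adj (e u) (e v) := by
        rintro u v (⟨h1', h2'⟩ | ⟨h1', h2'⟩ | ⟨h1', h2'⟩)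
        · exact Or.inl ⟨by simp [e, h1'], h2'⟩
        · exact Or.inr (Or.inl ⟨by simp [e, h1'], ⟨rfl, h2'⟩⟩)
        · exact Or.inr (Or.inr ⟨⟨rfl, h1'⟩, h2'⟩)
      have hginv : ∀ u v, f u = f v → g (e u) = g (e v) := by
        intro u v huv
        rw [← hf u, ← hf v, huv]
      obtain ⟨hm', hconn', hcard'⟩ := transfer_win e he hadj f hginv S hm hconn
      have := hb _ hm' hconn'
      omega
    · -- every copy contains the colour a: too many vertices in one mono component
      push_neg at hmiss
      choose wv wt hw using hmiss
      let ω : Fin (k + 2 - 1) → Option (Fin (k + 2 - 1) × V) × Fin (p + 1) :=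
        fun i => sb i (wv i) (wt i).val
      have hω : ∀ i, ω i = (some (i, wv i), wt i) := fun i => hsb i (wv i) (wt i)
      let Tspine : Finset (Option (Fin (k + 2 - 1) × V) × Fin (p + 1)) :=
        Finset.univ.image (fun t : Fin (p + 1) => ((none : Option (Fin (k + 2 - 1) × V)), t))
      let F : Finset (Option (Fin (k + 2 - 1) × V) × Fin (p + 1)) :=
        Tspine ∪ Finset.univ.image ω
      have hspine0 : ∀ t : ℕ, t ≤ p → Gf.Reachable (sv 0) (sv t) := by
        intro t
        induction t with
        | zero => intro _; exact SimpleGraph.Reachable.refl _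
        | succ t ih =>
          intro ht
          refine (ih (by omega)).trans (hadjspine t ht ?_).reachable
          rw [hsa t (by omega), hsa (t + 1) ht]
      have hreachF : ∀ x ∈ F, Gf.Reachable (sv 0) x := by
        intro x hx
        rcases Finset.mem_union.mp hx with hx | hx
        · obtain ⟨t, -, rfl⟩ := Finset.mem_image.mp hx
          rw [← hsv t]
          exact hspine0 t.val (Fin.is_le t)
        · obtain ⟨i, -, rfl⟩ := Finset.mem_image.mp hx
          have hadjw : Gf.Adj (ω i) (sv (wt i).val) := by
            refine hwadj i (wv i) (wt i).val (wt i).val (Fin.is_le _) (Fin.is_le _)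
              (Or.inl rfl) ?_
            rw [hsb i (wv i) (wt i), hw i]
            rw [show s (wt i).val = g (sv (wt i).val) from rfl, hsv]
            exact (hcs (wt i)).symm
          exact (hspine0 (wt i).val (Fin.is_le _)).trans hadjw.symm.reachable
      have hFcard : (p + 1) + (k + 1) ≤ F.card := by
        have hd : Disjoint Tspine (Finset.univ.image ω) := by
          rw [Finset.disjoint_left]
          rintro x hx1 hx2
          obtain ⟨t, -, rfl⟩ := Finset.mem_image.mp hx1
          obtain ⟨i, -, hi2⟩ := Finset.mem_image.mp hx2
          rw [hω i] at hi2
          simp at hi2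
        rw [Finset.card_union_of_disjoint hd]
        have hinj1 : Function.Injective
            (fun t : Fin (p + 1) => ((none : Option (Fin (k + 2 - 1) × V)), t)) :=
          fun _ _ htt => congrArg Prod.snd htt
        have h1' : Tspine.card = p + 1 := by
          rw [Finset.card_image_of_injective _ hinj1, Finset.card_univ, Fintype.card_fin]
        have hinj2 : Function.Injective ω := by
          intro i j hij
          rw [hω i, hω j] at hij
          simp only [Prod.mk.injEq, Option.some.injEq] at hij
          exact hij.1.1
        have h2' : (Finset.univ.image ω).card = k + 1 := by
          rw [Finset.card_image_of_injective _ hinj2, Finset.card_univ, Fintype.card_fin]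
          omega
        omega
      have := card_le_of_mono_reachable hb (sv 0) F hreachF
      omega
  · -- non-constant spine
    push_neg at hcs
    obtain ⟨t₀, ht₀⟩ := hcs
    have hstep : ∃ u, u + 1 ≤ p ∧ s u ≠ s (u + 1) := by
      have hne : s 0 ≠ s t₀.val := by
        rw [show s t₀.val = g (sv t₀.val) from rfl, hsv]
        rw [show s 0 = g (sv 0) from rfl]
        rw [show sv 0 = ((none : Option (Fin (k + 2 - 1) × V)), (⟨0, by omega⟩ : Fin (p + 1)))
          from by simp [sv]]
        exact fun hh => ht₀ hh.symm
      have hpos : 0 < t₀.val := by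
        rcases Nat.eq_zero_or_pos t₀.val with h0 | h0
        · exact absurd (congrArg s h0.symm) hne
        · exact h0
      obtain ⟨u, -, hu2, hu3⟩ := exists_step_ne hne hpos
      exact ⟨u, le_trans hu2 (Fin.is_le t₀), hu3⟩
    set ℓ := Nat.find hstep with hldef
    have hℓ := Nat.find_spec hstep
    have hℓmin : ∀ u < ℓ, s u = s (u + 1) := by
      intro u hu
      have hq := Nat.find_min hstep hu
      by_contra hne
      exact hq ⟨by omega, hne⟩
    have hanchℓ : runAnchor s ℓ = 0 := runAnchor_eq_zero ℓ hℓmin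
    set B : Finset ℕ := (Finset.range (p + 1)).image (runAnchor s) with hBdef
    have hB : ∀ a ∈ B, a ≤ p ∧ runAnchor s a = a := by
      intro a ha
      obtain ⟨t, ht, rfl⟩ := Finset.mem_image.mp ha
      have h3 := runAnchor_le (s := s) t
      rw [Finset.mem_range] at ht
      exact ⟨by omega, runAnchor_idem t⟩
    have hmem : ∀ t : ℕ, t ≤ p → runAnchor s t ∈ B :=
      fun t ht => Finset.mem_image.mpr ⟨t, Finset.mem_range.mpr (by omega), rfl⟩
    set d : ℕ → ℕ := fun a => if a = 0 then ℓ else a with hddef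
    set d' : ℕ → ℕ := fun a => if a = 0 then ℓ + 1 else a - 1 with hd'def
    have hdprop : ∀ a ∈ B, d a ≤ p ∧ d' a ≤ p ∧ runAnchor s (d a) = a ∧ s (d a) ≠ s (d' a) ∧
        (d' a = d a ∨ d' a + 1 = d a ∨ d a + 1 = d' a) := by
      intro a ha
      obtain ⟨hale, haanch⟩ := hB a ha
      by_cases h0 : a = 0
      · subst h0
        have e1 : d 0 = ℓ := by simp [hddef]
        have e2 : d' 0 = ℓ + 1 := by simp [hd'def]
        rw [e1, e2]
        exact ⟨by omega, by omega, e1 ▸ hanchℓ.symm ▸ hanchℓ, hℓ.2, Or.inr (Or.inr rfl)⟩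
      · simp only [hddef, hd'def, if_neg h0]
        refine ⟨hale, by omega, haanch, ?_, Or.inr (Or.inl (by omega))⟩
        rcases runAnchor_boundary (s := s) a with hc0 | ⟨-, hcne⟩
        · rw [haanch] at hc0; exact absurd hc0 h0
        · rw [haanch] at hcne
          exact fun hh => hcne hh.symm
    by_cases hwin : ∃ (i : Fin (k + 2 - 1)) (a : ℕ), a ∈ B ∧ ∀ v : V,
        g (sb i v (d a)) ≠ s (d a) ∧ g (sb i v (d a)) ≠ s (d' a)
    · -- a whole column avoids two colours: use h1
      obtain ⟨i, a, ha, hgood⟩ := hwin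
      obtain ⟨-, -, -, hxy, -⟩ := hdprop a ha
      let y₀ : Fin (c + 2) := (Fin.exists_succAbove_eq (Ne.symm hxy)).choose
      have hy₀ : (s (d a)).succAbove y₀ = s (d' a) :=
        (Fin.exists_succAbove_eq (Ne.symm hxy)).choose_spec
      let e : V → Option (Fin (k + 2 - 1) × V) × Fin (p + 1) := fun v => sb i v (d a)
      have hne1 : ∀ v, g (e v) ≠ s (d a) := fun v => (hgood v).1
      let f1 : V → Fin (c + 2) := fun v => (Fin.exists_succAbove_eq (hne1 v)).choose
      have hf1 : ∀ v, (s (d a)).succAbove (f1 v) = g (e v) :=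
        fun v => (Fin.exists_succAbove_eq (hne1 v)).choose_spec
      have hne2 : ∀ v, f1 v ≠ y₀ := by
        intro v hv
        apply (hgood v).2
        rw [← hf1 v, hv, hy₀]
      let f : V → Fin (c + 1) := fun v => (Fin.exists_succAbove_eq (hne2 v)).choose
      have hf : ∀ v, y₀.succAbove (f v) = f1 v :=
        fun v => (Fin.exists_succAbove_eq (hne2 v)).choose_spec
      have hginv : ∀ u v, f u = f v → g (e u) = g (e v) := by
        intro u v huv
        rw [← hf1 u, ← hf1 v, ← hf u, ← hf v, huv]
      obtain ⟨S, hm, hconn, hcard⟩ := h1 f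
      have he : Function.Injective e := by
        intro u v huv
        simp only [e, sb, Prod.mk.injEq, Option.some.injEq] at huv
        exact huv.1.2
      have hadj : ∀ u v, H.Adj u v → G.Adj (e u) (e v) := by
        intro u v huv
        exact Or.inr (Or.inl ⟨rfl, ⟨rfl, huv⟩⟩)
      obtain ⟨hm', hconn', hcard'⟩ := transfer_win e he hadj f hginv S hm hconn
      have := hb _ hm' hconn'
      omega
    · -- every column near a colour change contains a spine colour: count
      push_neg at hwin
      choose wv hwv using hwin
      let Tspine : Finset (Option (Fin (k + 2 - 1) × V) × Fin (p + 1)) :=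
        Finset.univ.image (fun t : Fin (p + 1) => ((none : Option (Fin (k + 2 - 1) × V)), t))
      let ωp : Fin (k + 2 - 1) × {a // a ∈ B} → Option (Fin (k + 2 - 1) × V) × Fin (p + 1) :=
        fun x => sb x.1 (wv x.1 x.2.1 x.2.2) (d x.2.1)
      let Twit : Finset (Option (Fin (k + 2 - 1) × V) × Fin (p + 1)) :=
        ((Finset.univ : Finset (Fin (k + 2 - 1))) ×ˢ B.attach).image ωp
      have hωinj : Set.InjOn ωp ↑((Finset.univ : Finset (Fin (k + 2 - 1))) ×ˢ B.attach) := by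
        rintro ⟨i, a, ha⟩ - ⟨j, b, hb⟩ - hij
        simp only [ωp, sb, Prod.mk.injEq, Option.some.injEq, Fin.mk.injEq] at hij
        obtain ⟨⟨hij1, -⟩, hij2⟩ := hij
        have hda := (hdprop a ha).1
        have hdb := (hdprop b hb).1
        have hdd : d a = d b := by omega
        have hab : a = b := by
          have h5 := congrArg (runAnchor s) hdd
          rwa [(hdprop a ha).2.2.1, (hdprop b hb).2.2.1] at h5
        subst hab
        exact Prod.ext hij1 rfl
      set T := Tspine ∪ Twit with hTdef
      set R : Finset (Option (Fin (k + 2 - 1) × V) × Fin (p + 1)) := B.image sv with hRdef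
      have hreachT : ∀ x ∈ T, ∃ r ∈ R, Gf.Reachable r x := by
        intro x hx
        rcases Finset.mem_union.mp hx with hx | hx
        · obtain ⟨t, -, rfl⟩ := Finset.mem_image.mp hx
          refine ⟨sv (runAnchor s t.val), Finset.mem_image.mpr ⟨_, hmem t.val (Fin.is_le t), rfl⟩, ?_⟩
          rw [← hsv t]
          exact hreach t.val (Fin.is_le t)
        · obtain ⟨⟨i, a, ha⟩, -, rfl⟩ := Finset.mem_image.mp hx
          obtain ⟨hd1, hd2, -, -, hd5⟩ := hdprop a ha
          by_cases hcol : g (sb i (wv i a ha) (d a)) = s (d a)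
          · refine ⟨sv (runAnchor s (d a)), Finset.mem_image.mpr ⟨_, hmem (d a) hd1, rfl⟩, ?_⟩
            refine (hreach (d a) hd1).trans ?_
            exact (hwadj i (wv i a ha) (d a) (d a) hd1 hd1 (Or.inl rfl) hcol).symm.reachable
          · have hcol2 := hwv i a ha hcol
            refine ⟨sv (runAnchor s (d' a)), Finset.mem_image.mpr ⟨_, hmem (d' a) hd2, rfl⟩, ?_⟩
            refine (hreach (d' a) hd2).trans ?_
            exact (hwadj i (wv i a ha) (d a) (d' a) hd1 hd2 hd5 hcol2).symm.reachable
      have hTcard : T.card = (p + 1) + (k + 1) * B.card := by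
        have hdisj : Disjoint Tspine Twit := by
          rw [Finset.disjoint_left]
          rintro x hx1 hx2
          obtain ⟨t, -, rfl⟩ := Finset.mem_image.mp hx1
          obtain ⟨⟨i, a, ha⟩, -, hi2⟩ := Finset.mem_image.mp hx2
          simp [ωp, sb] at hi2
        rw [hTdef, Finset.card_union_of_disjoint hdisj]
        have hinj1 : Function.Injective
            (fun t : Fin (p + 1) => ((none : Option (Fin (k + 2 - 1) × V)), t)) :=
          fun _ _ htt => congrArg Prod.snd htt
        have h1' : Tspine.card = p + 1 := by
          rw [Finset.card_image_of_injective _ hinj1, Finset.card_univ, Fintype.card_fin]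
        have h2' : Twit.card = (k + 1) * B.card := by
          rw [Finset.card_image_of_injOn hωinj, Finset.card_product, Finset.card_univ,
            Fintype.card_fin, Finset.card_attach]
          congr 1
        omega
      have hle := card_le_of_mono_reachable_finset hb R T hreachT
      have hRcard : R.card ≤ B.card := Finset.card_image_le
      have hfin : T.card ≤ B.card * (k + 1) :=
        le_trans hle (Nat.mul_le_mul_right _ hRcard)
      rw [hTcard, Nat.mul_comm] at hfin
      exact absurd hfin (by
        push_neg
        exact Nat.lt_add_of_pos_left (by omega))
end
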